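/- arXiv:1402.6577 — 7 statements merged into one kernel-verified Lean document; each statement's English description precedes it below -/
import Mathlib

section
/- The alternating series ∑_{k=1}^∞ (-1)^k · ln(k)/k converges and equals γ·ln 2 - (1/2)(ln 2)², where γ is the Euler–Mascheroni constant. -/
open Real Filter Finset

noncomputable def gg : ℕ → ℝ := fun n => Real.log n / n

lemma key_identity (N : ℕ) :
    (∑ k ∈ Finset.range (2 * N), (-1 : ℝ) ^ (k + 1) * gg (k + 1))
      = Real.log 2 * (harmonic N : ℝ)
        + ∑ k ∈ Finset.range N, gg (k + 1)
        - ∑ k ∈ Finset.range (2 * N), gg (k + 1) := by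
  induction N with
  | zero => simp
  | succ N ih =>
    have h2 : 2 * (N + 1) = (2 * N + 1) + 1 := by ring
    rw [h2, Finset.sum_range_succ, Finset.sum_range_succ (fun k => (-1:ℝ)^(k+1) * gg (k+1)),
      Finset.sum_range_succ, Finset.sum_range_succ (fun k => gg (k+1)), Finset.sum_range_succ,
      harmonic_succ, ih]
    have he : (-1 : ℝ) ^ (2 * N + 1 + 1) = 1 := Even.neg_one_pow ⟨N + 1, by ring⟩
    have ho : (-1 : ℝ) ^ (2 * N + 1) = -1 := Odd.neg_one_pow ⟨N, rfl⟩
    have hlog : gg (2 * N + 1 + 1) = (Real.log 2 + Real.log (N + 1)) / (2 * ((N : ℝ) + 1)) := by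
      have : ((2 * N + 1 + 1 : ℕ) : ℝ) = 2 * ((N : ℝ) + 1) := by push_cast; ring
      rw [gg, this, Real.log_mul two_ne_zero (by positivity)]
    have hgN : gg (N + 1) = Real.log (N + 1) / ((N : ℝ) + 1) := by
      rw [gg]; push_cast; ring_nf
    rw [he, ho, hlog, hgN]
    push_cast
    field_simp
    ring

lemma integral_log_div_self {a b : ℝ} (ha : 0 < a) (hab : a ≤ b) :
    ∫ x in a..b, Real.log x / x = Real.log b ^ 2 / 2 - Real.log a ^ 2 / 2 := by
  have hsub : Set.uIcc a b ⊆ {x : ℝ | x ≠ 0} := by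
    rw [Set.uIcc_of_le hab]
    intro x hx
    exact (lt_of_lt_of_le ha hx.1).ne'
  apply intervalIntegral.integral_eq_sub_of_hasDerivAt
  · intro x hx
    rw [Set.uIcc_of_le hab] at hx
    have hx0 : x ≠ 0 := (lt_of_lt_of_le ha hx.1).ne'
    have := ((Real.hasDerivAt_log hx0).pow 2).div_const 2
    convert this using 1
    · rfl
    · funext y; simp [Pi.pow_apply]
    · field_simp
      ring
  · apply ContinuousOn.intervalIntegrable
    exact (Real.continuousOn_log.mono hsub).div continuousOn_id (fun x hx => hsub hx)

lemma bound_lemma {N : ℕ} (hN : 3 ≤ N) :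
    0 ≤ (∫ x in (N : ℝ)..((2 * N : ℕ) : ℝ), Real.log x / x) - ∑ i ∈ Finset.Ico N (2 * N), gg (i + 1)
    ∧ (∫ x in (N : ℝ)..((2 * N : ℕ) : ℝ), Real.log x / x) - ∑ i ∈ Finset.Ico N (2 * N), gg (i + 1) ≤ gg N := by
  have hab : N ≤ 2 * N := by omega
  have hf : AntitoneOn (fun x : ℝ => Real.log x / x) (Set.Icc (N : ℝ) ((2 * N : ℕ) : ℝ)) := by
    apply Real.log_div_self_antitoneOn.mono
    intro x hx
    have h1 : Real.exp 1 < 3 := by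
      have := Real.exp_one_lt_d9; linarith
    have : (3 : ℝ) ≤ N := by exact_mod_cast hN
    exact le_trans (le_trans h1.le this) hx.1
  have h1 : (∑ i ∈ Finset.Ico N (2 * N), gg (i + 1)) ≤ ∫ x in (N : ℝ)..((2 * N : ℕ) : ℝ), Real.log x / x := by
    have := AntitoneOn.sum_le_integral_Ico hab hf
    convert this using 1
    rfl
  have h2 : (∫ x in (N : ℝ)..((2 * N : ℕ) : ℝ), Real.log x / x) ≤ ∑ i ∈ Finset.Ico N (2 * N), gg i :=
    AntitoneOn.integral_le_sum_Ico hab hf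
  have h3 : (∑ i ∈ Finset.Ico N (2 * N), gg i) - ∑ i ∈ Finset.Ico N (2 * N), gg (i + 1)
      = gg N - gg (2 * N) := by
    rw [← Finset.sum_sub_distrib, Finset.sum_Ico_eq_sum_range,
      show 2 * N - N = N from by omega]
    have := Finset.sum_range_sub' (fun i => gg (N + i)) N
    simpa [add_assoc, two_mul] using this
  have hgpos : 0 ≤ gg (2 * N) := by
    apply div_nonneg _ (Nat.cast_nonneg _)
    apply Real.log_nonneg
    have : (1:ℕ) ≤ 2*N := by omega
    exact_mod_cast this
  exact ⟨by linarith, by linarith⟩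

lemma gg_tendsto_zero : Tendsto gg atTop (nhds 0) :=
  (Real.isLittleO_log_id_atTop.tendsto_div_nhds_zero).comp tendsto_natCast_atTop_atTop

lemma tendsto_even_odd {f : ℕ → ℝ} {L : ℝ}
    (he : Tendsto (fun n => f (2 * n)) atTop (nhds L))
    (ho : Tendsto (fun n => f (2 * n + 1)) atTop (nhds L)) :
    Tendsto f atTop (nhds L) := by
  rw [Metric.tendsto_atTop] at he ho ⊢
  intro ε hε
  obtain ⟨N₁, h₁⟩ := he ε hε
  obtain ⟨N₂, h₂⟩ := ho ε hε
  refine ⟨2 * (N₁ + N₂) + 1, fun m hm => ?_⟩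
  rcases Nat.even_or_odd m with ⟨k, hk⟩ | ⟨k, hk⟩
  · have hm2 : m = 2 * k := by omega
    rw [hm2]
    exact h₁ k (by omega)
  · have hm2 : m = 2 * k + 1 := by omega
    rw [hm2]
    exact h₂ k (by omega)

/-- The alternating series `∑_{k=1}^∞ (-1)^k ln k / k` converges to
`γ ln 2 - (1/2)(ln 2)²`, where `γ` is the Euler–Mascheroni constant. -/
theorem alt_log_div_self_sum :
    Tendsto (fun N => ∑ k ∈ Finset.range N,
        (-1 : ℝ) ^ (k + 1) * Real.log ((k + 1 : ℕ) : ℝ) / ((k + 1 : ℕ) : ℝ))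
      atTop
      (nhds (Real.eulerMascheroniConstant * Real.log 2 - (1 / 2) * (Real.log 2) ^ 2)) := by
  set L : ℝ := Real.eulerMascheroniConstant * Real.log 2 - (1 / 2) * (Real.log 2) ^ 2 with hL
  set S : ℕ → ℝ := fun N => ∑ k ∈ Finset.range N, (-1 : ℝ) ^ (k + 1) * gg (k + 1) with hS
  set E : ℕ → ℝ := fun N =>
    (∫ x in (N : ℝ)..((2 * N : ℕ) : ℝ), Real.log x / x) - ∑ i ∈ Finset.Ico N (2 * N), gg (i + 1)
    with hE
  have hE0 : Tendsto E atTop (nhds 0) := by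
    apply tendsto_of_tendsto_of_tendsto_of_le_of_le' tendsto_const_nhds gg_tendsto_zero
    · filter_upwards [eventually_ge_atTop 3] with N hN using (bound_lemma hN).1
    · filter_upwards [eventually_ge_atTop 3] with N hN using (bound_lemma hN).2
  have hH : Tendsto (fun n : ℕ => (harmonic n : ℝ) - Real.log n) atTop
      (nhds Real.eulerMascheroniConstant) := Real.tendsto_harmonic_sub_log
  have heven : Tendsto (fun N => S (2 * N)) atTop (nhds L) := by
    have hcomb : Tendsto (fun N : ℕ =>
        Real.log 2 * ((harmonic N : ℝ) - Real.log N) - (Real.log 2) ^ 2 / 2 + E N) atTop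
        (nhds (Real.log 2 * Real.eulerMascheroniConstant - (Real.log 2) ^ 2 / 2 + 0)) :=
      ((hH.const_mul _).sub_const _).add hE0
    have hLeq : L = Real.log 2 * Real.eulerMascheroniConstant - (Real.log 2) ^ 2 / 2 + 0 := by
      rw [hL]; ring
    rw [hLeq]
    apply hcomb.congr'
    filter_upwards [eventually_ge_atTop 3] with N hN
    have hN0 : (0 : ℝ) < N := by
      have : (0:ℕ) < N := by omega
      exact_mod_cast this
    have hint : (∫ x in (N : ℝ)..((2 * N : ℕ) : ℝ), Real.log x / x)
        = (Real.log 2) ^ 2 / 2 + Real.log 2 * Real.log N := by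
      have hcast : ((2 * N : ℕ) : ℝ) = 2 * (N : ℝ) := by push_cast; ring
      rw [integral_log_div_self hN0 (by rw [hcast]; linarith), hcast,
        Real.log_mul two_ne_zero hN0.ne']
      ring
    have hB : (∑ i ∈ Finset.Ico N (2 * N), gg (i + 1))
        = ∑ k ∈ Finset.range (2 * N), gg (k + 1) - ∑ k ∈ Finset.range N, gg (k + 1) := by
      rw [Finset.sum_Ico_eq_sub _ (by omega)]
    have := key_identity N
    rw [hS]
    simp only
    rw [this]
    have hEN : (∑ k ∈ Finset.range (2 * N), gg (k + 1)) - ∑ k ∈ Finset.range N, gg (k + 1)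
        = (Real.log 2) ^ 2 / 2 + Real.log 2 * Real.log N - E N := by
      rw [← hB, hE]; simp only; rw [hint]; ring
    linarith
  have hodd : Tendsto (fun N => S (2 * N + 1)) atTop (nhds L) := by
    have hterm : Tendsto (fun N : ℕ => (-1 : ℝ) ^ (2 * N + 1) * gg (2 * N + 1)) atTop (nhds 0) := by
      have h2 : Tendsto (fun N : ℕ => 2 * N + 1) atTop atTop := by
        apply tendsto_atTop_mono _ tendsto_id
        intro n
        simp only [id_eq]
        omega
      have := gg_tendsto_zero.comp h2
      have habs : Tendsto (fun N : ℕ => (-1 : ℝ) ^ (2 * N + 1) * gg (2 * N + 1)) atTop (nhds 0) := by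
        have : (fun N : ℕ => (-1 : ℝ) ^ (2 * N + 1) * gg (2 * N + 1))
            = fun N : ℕ => -(gg (2 * N + 1)) := by
          funext N
          rw [Odd.neg_one_pow ⟨N, rfl⟩]
          ring
        rw [this]
        simpa using (gg_tendsto_zero.comp h2).neg
      exact habs
    have : Tendsto (fun N => S (2 * N) + (-1 : ℝ) ^ (2 * N + 1) * gg (2 * N + 1)) atTop
        (nhds (L + 0)) := heven.add hterm
    rw [add_zero] at this
    apply this.congr
    intro N
    rw [hS]
    simp only
    rw [Finset.sum_range_succ]
  have hfull : Tendsto S atTop (nhds L) := tendsto_even_odd heven hodd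
  apply hfull.congr
  intro N
  apply Finset.sum_congr rfl
  intro k _
  rw [gg, mul_div_assoc]
end

section
/- The infinite product ∏_{n=1}^∞ [ (2n)^{1/(2n)} · (2n)^{1/(2n)} / ( (2n-1)^{1/(2n-1)} · (2n+1)^{1/(2n+1)} ) ] converges and equals 2^{2γ - ln 2}, where γ is the Euler–Mascheroni constant. -/
open Real Filter Finset

noncomputable def ff (k : ℕ) : ℝ := Real.log k / k

lemma ff_one : ff 1 = 0 := by simp [ff]

lemma ff_nonneg (k : ℕ) : 0 ≤ ff k := by
  cases k with
  | zero => simp [ff]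
  | succ n =>
    apply div_nonneg _ (by positivity)
    apply Real.log_nonneg
    exact_mod_cast Nat.succ_le_succ (Nat.zero_le n)

lemma two_ff (n : ℕ) : 2 * ff (2 * n + 2) = Real.log 2 / (n + 1) + ff (n + 1) := by
  have hn : (0 : ℝ) < (n : ℝ) + 1 := by positivity
  have h1 : ((2 * n + 2 : ℕ) : ℝ) = 2 * ((n : ℝ) + 1) := by push_cast; ring
  rw [ff, ff, h1, Real.log_mul two_ne_zero hn.ne']
  push_cast
  field_simp

/-- partial sums of the alternating series `∑ (-1)^k log k / k` -/
noncomputable def T (M : ℕ) : ℝ := ∑ k ∈ Finset.range M, (-1 : ℝ) ^ (k + 1) * ff (k + 1)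

noncomputable def L (M : ℕ) : ℝ := ∑ k ∈ Finset.range M, ff (k + 1)

lemma T_step (N : ℕ) : T (2 * N + 2) = T (2 * N) + ff (2 * N + 2) - ff (2 * N + 1) := by
  rw [T, T, Finset.sum_range_succ, Finset.sum_range_succ]
  have h1 : (-1 : ℝ) ^ (2 * N + 1) = -1 := by
    rw [pow_succ, pow_mul]; norm_num
  have h2 : (-1 : ℝ) ^ (2 * N + 1 + 1) = 1 := by
    rw [pow_succ, h1]; norm_num
  rw [h1, h2]; ring

lemma T_eq (N : ℕ) : T (2 * N) = Real.log 2 * (harmonic N : ℝ) + L N - L (2 * N) := by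
  induction N with
  | zero => simp [T, L]
  | succ N ih =>
    have h2 : 2 * (N + 1) = 2 * N + 2 := by ring
    rw [h2, T_step, ih, harmonic_succ]
    have hL1 : L (N + 1) = L N + ff (N + 1) := by rw [L, L, Finset.sum_range_succ]
    have hL2 : L (2 * N + 2) = L (2 * N) + ff (2 * N + 1) + ff (2 * N + 2) := by
      rw [L, L, Finset.sum_range_succ, Finset.sum_range_succ]
    rw [hL1, hL2]
    push_cast
    have hinv : Real.log 2 * ((N : ℝ) + 1)⁻¹ = Real.log 2 / ((N : ℝ) + 1) := by
      rw [div_eq_mul_inv]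
    linarith [two_ff N, hinv]

/-- the log of the partial product -/
lemma S_eq (N : ℕ) :
    ∑ n ∈ Finset.range N, (2 * ff (2 * n + 2) - ff (2 * n + 1) - ff (2 * n + 3)) =
      2 * T (2 * N) - ff (2 * N + 1) := by
  induction N with
  | zero => simp [T, ff_one]
  | succ N ih =>
    rw [Finset.sum_range_succ, ih]
    have h2 : 2 * (N + 1) = 2 * N + 2 := by ring
    rw [h2, T_step, show 2 * N + 2 + 1 = 2 * N + 3 from rfl]
    ring

lemma R_eq_sum (N : ℕ) : L (2 * N) - L N = ∑ k ∈ Finset.Ico N (2 * N), ff (k + 1) := by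
  rw [Finset.sum_Ico_eq_sub (fun k => ff (k + 1)) (by omega : N ≤ 2 * N)]
  rfl

lemma integral_val {N : ℕ} (hN : 3 ≤ N) :
    ∫ x in (N : ℝ)..((2 * N : ℕ) : ℝ), Real.log x / x =
      Real.log 2 * Real.log N + (Real.log 2) ^ 2 / 2 := by
  have hN0 : (0 : ℝ) < N := by
    have : (3:ℝ) ≤ N := by exact_mod_cast hN
    linarith
  have h2N : ((2 * N : ℕ) : ℝ) = 2 * (N : ℝ) := by push_cast; ring
  rw [h2N]
  have hmem : ∀ x ∈ Set.uIcc (N : ℝ) (2 * N), 0 < x := by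
    intro x hx
    rcases Set.mem_uIcc.1 hx with h | h
    · linarith [h.1]
    · nlinarith [h.1]
  have hderiv : ∀ x ∈ Set.uIcc (N : ℝ) (2 * N),
      HasDerivAt (fun y : ℝ => Real.log y ^ 2 / 2) (Real.log x / x) x := by
    intro x hx
    have hx0 := hmem x hx
    have h1 : HasDerivAt Real.log x⁻¹ x := Real.hasDerivAt_log hx0.ne'
    have h2 : HasDerivAt (fun y : ℝ => Real.log y ^ 2 / 2)
        (((2 : ℕ) : ℝ) * Real.log x ^ (2 - 1) * x⁻¹ / 2) x := (h1.pow 2).div_const 2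
    convert h2 using 1
    norm_num
    ring
  have hcont : ContinuousOn (fun x : ℝ => Real.log x / x) (Set.uIcc (N : ℝ) (2 * N)) := by
    apply ContinuousOn.div
    · exact Real.continuousOn_log.mono fun x hx => (hmem x hx).ne'
    · exact continuousOn_id
    · exact fun x hx => (hmem x hx).ne'
  rw [intervalIntegral.integral_eq_sub_of_hasDerivAt hderiv hcont.intervalIntegrable]
  rw [Real.log_mul two_ne_zero hN0.ne']
  ring

lemma antitoneOn_log_div {N : ℕ} (hN : 3 ≤ N) :
    AntitoneOn (fun x : ℝ => Real.log x / x) (Set.Icc (N : ℝ) ((2 * N : ℕ) : ℝ)) := by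
  apply Real.log_div_self_antitoneOn.mono
  intro x hx
  have he : Real.exp 1 < 3 := by
    have := Real.exp_one_lt_d9
    linarith
  have hN3 : (3 : ℝ) ≤ N := by exact_mod_cast hN
  exact Set.mem_setOf.2 (le_trans he.le (le_trans hN3 hx.1))

lemma R_bounds {N : ℕ} (hN : 3 ≤ N) :
    Real.log 2 * Real.log N + (Real.log 2) ^ 2 / 2 - ff N ≤ L (2 * N) - L N ∧
      L (2 * N) - L N ≤ Real.log 2 * Real.log N + (Real.log 2) ^ 2 / 2 := by
  have hab : N ≤ 2 * N := by omega
  have hanti := antitoneOn_log_div hN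
  have hub := hanti.sum_le_integral_Ico hab
  have hlb := hanti.integral_le_sum_Ico hab
  rw [integral_val hN] at hub hlb
  have e1 : (∑ i ∈ Finset.Ico N (2 * N), (fun x : ℝ => Real.log x / x) ((i + 1 : ℕ) : ℝ)) =
      ∑ k ∈ Finset.Ico N (2 * N), ff (k + 1) := rfl
  have e2 : (∑ i ∈ Finset.Ico N (2 * N), (fun x : ℝ => Real.log x / x) (i : ℝ)) =
      ∑ k ∈ Finset.Ico N (2 * N), ff k := rfl
  rw [e1] at hub
  rw [e2] at hlb
  rw [R_eq_sum]
  refine ⟨?_, hub⟩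
  -- lower bound: relate ∑ ff k and ∑ ff (k+1) over Ico N (2N)
  have h3 : ∑ k ∈ Finset.Ico N (2 * N), ff k =
      ff N + ∑ k ∈ Finset.Ico (N + 1) (2 * N), ff k :=
    Finset.sum_eq_sum_Ico_succ_bot (by omega) ff
  have h4 : ∑ k ∈ Finset.Ico N (2 * N), ff (k + 1) =
      (∑ k ∈ Finset.Ico (N + 1) (2 * N), ff k) + ff (2 * N) := by
    rw [Finset.sum_Ico_add' ff N (2 * N) 1]
    exact Finset.sum_Ico_succ_top (by omega) ff
  have := ff_nonneg (2 * N)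
  linarith

lemma tendsto_R :
    Tendsto (fun N : ℕ => L (2 * N) - L N - Real.log 2 * Real.log N) atTop
      (nhds ((Real.log 2) ^ 2 / 2)) := by
  have hffN : Tendsto (fun N : ℕ => ff N) atTop (nhds 0) := by
    have h := Real.isLittleO_log_id_atTop.tendsto_div_nhds_zero
    exact h.comp tendsto_natCast_atTop_atTop
  apply tendsto_of_tendsto_of_tendsto_of_le_of_le'
    (g := fun N : ℕ => (Real.log 2) ^ 2 / 2 - ff N) (h := fun _ : ℕ => (Real.log 2) ^ 2 / 2)
  · simpa using tendsto_const_nhds.sub hffN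
  · exact tendsto_const_nhds
  · filter_upwards [eventually_ge_atTop 3] with N hN
    have := (R_bounds hN).1
    linarith
  · filter_upwards [eventually_ge_atTop 3] with N hN
    have := (R_bounds hN).2
    linarith

lemma tendsto_T :
    Tendsto (fun N : ℕ => T (2 * N)) atTop
      (nhds (Real.log 2 * Real.eulerMascheroniConstant - (Real.log 2) ^ 2 / 2)) := by
  have h1 : Tendsto (fun N : ℕ => (harmonic N : ℝ) - Real.log N) atTop
      (nhds Real.eulerMascheroniConstant) := Real.tendsto_harmonic_sub_log
  have h2 := (h1.const_mul (Real.log 2)).sub tendsto_R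
  have heq : (fun N : ℕ => Real.log 2 * ((harmonic N : ℝ) - Real.log N) -
      (L (2 * N) - L N - Real.log 2 * Real.log N)) = fun N : ℕ => T (2 * N) := by
    funext N
    rw [T_eq]
    ring
  rw [heq] at h2
  exact h2

lemma tendsto_S :
    Tendsto (fun N : ℕ => 2 * T (2 * N) - ff (2 * N + 1)) atTop
      (nhds ((2 * Real.eulerMascheroniConstant - Real.log 2) * Real.log 2)) := by
  have hffN : Tendsto (fun N : ℕ => ff (2 * N + 1)) atTop (nhds 0) := by
    have h := Real.isLittleO_log_id_atTop.tendsto_div_nhds_zero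
    have := h.comp (tendsto_natCast_atTop_atTop (R := ℝ))
    exact this.comp (tendsto_atTop_atTop_of_monotone (fun a b hab => by omega)
      (fun b => ⟨b, by omega⟩))
  have := (tendsto_T.const_mul 2).sub hffN
  convert this using 2
  ring

/-- The infinite product
`∏_{n=1}^∞ (2n)^{1/(2n)} (2n)^{1/(2n)} / ((2n-1)^{1/(2n-1)} (2n+1)^{1/(2n+1)})`
converges to `2^{2γ - ln 2}`, where `γ` is the Euler–Mascheroni constant. -/
theorem wallis_like_product_eta_one :
    Tendsto (fun N => ∏ n ∈ Finset.range N,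
        ((2 * (n + 1 : ℕ) : ℝ) ^ (1 / (2 * (n + 1 : ℕ) : ℝ)) *
          (2 * (n + 1 : ℕ) : ℝ) ^ (1 / (2 * (n + 1 : ℕ) : ℝ)) /
            ((2 * (n + 1 : ℕ) - 1 : ℝ) ^ (1 / (2 * (n + 1 : ℕ) - 1 : ℝ)) *
              (2 * (n + 1 : ℕ) + 1 : ℝ) ^ (1 / (2 * (n + 1 : ℕ) + 1 : ℝ)))))
      atTop
      (nhds ((2 : ℝ) ^ (2 * Real.eulerMascheroniConstant - Real.log 2))) := by
  have key : ∀ N : ℕ, (∏ n ∈ Finset.range N,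
        ((2 * (n + 1 : ℕ) : ℝ) ^ (1 / (2 * (n + 1 : ℕ) : ℝ)) *
          (2 * (n + 1 : ℕ) : ℝ) ^ (1 / (2 * (n + 1 : ℕ) : ℝ)) /
            ((2 * (n + 1 : ℕ) - 1 : ℝ) ^ (1 / (2 * (n + 1 : ℕ) - 1 : ℝ)) *
              (2 * (n + 1 : ℕ) + 1 : ℝ) ^ (1 / (2 * (n + 1 : ℕ) + 1 : ℝ))))) =
      Real.exp (2 * T (2 * N) - ff (2 * N + 1)) := by
    intro N
    rw [← S_eq, Real.exp_sum]
    apply Finset.prod_congr rfl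
    intro n _
    have h1 : ((2 * (n + 1) : ℕ) : ℝ) = 2 * ((n : ℝ) + 1) := by push_cast; ring
    have hp1 : (0 : ℝ) < 2 * ((n : ℝ) + 1) := by positivity
    have hp2 : (0 : ℝ) < 2 * ((n : ℝ) + 1) - 1 := by nlinarith [Nat.cast_nonneg (α := ℝ) n]
    have hp3 : (0 : ℝ) < 2 * ((n : ℝ) + 1) + 1 := by positivity
    have e1 : (2 * ((n : ℝ) + 1)) ^ (1 / (2 * ((n : ℝ) + 1))) = Real.exp (ff (2 * n + 2)) := by
      rw [Real.rpow_def_of_pos hp1, ff]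
      congr 1
      push_cast
      ring
    have e2 : (2 * ((n : ℝ) + 1) - 1) ^ (1 / (2 * ((n : ℝ) + 1) - 1)) =
        Real.exp (ff (2 * n + 1)) := by
      rw [Real.rpow_def_of_pos hp2, ff]
      congr 1
      push_cast
      ring
    have e3 : (2 * ((n : ℝ) + 1) + 1) ^ (1 / (2 * ((n : ℝ) + 1) + 1)) =
        Real.exp (ff (2 * n + 3)) := by
      rw [Real.rpow_def_of_pos hp3, ff]
      congr 1
      push_cast
      ring
    push_cast
    rw [e1, e2, e3, ← Real.exp_add, ← Real.exp_add, ← Real.exp_sub]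
    congr 1
    ring
  simp only [key]
  rw [show (2 : ℝ) ^ (2 * Real.eulerMascheroniConstant - Real.log 2) =
      Real.exp ((2 * Real.eulerMascheroniConstant - Real.log 2) * Real.log 2) from by
    rw [Real.rpow_def_of_pos two_pos]; ring_nf]
  exact (Real.continuous_exp.tendsto _).comp tendsto_S
end

section
/- If η'(s) denotes the sum of the convergent series ∑_{k=1}^∞ (-1)^k · ln(k)/k^s for real s > 0, then exp(2·η'(s)) equals the infinite product ∏_{n=1}^∞ [ (2n)^{1/(2n)^s} · (2n)^{1/(2n)^s} / ( (2n-1)^{1/(2n-1)^s} · (2n+1)^{1/(2n+1)^s} ) ]. -/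
open Real Filter Finset

/-- If `η'(s)` is the sum of the convergent series `∑_{k=1}^∞ (-1)^k ln k / k^s` (`s > 0`),
then `exp (2 η'(s))` equals the infinite product
`∏_{n=1}^∞ (2n)^{1/(2n)^s} (2n)^{1/(2n)^s} / ((2n-1)^{1/(2n-1)^s} (2n+1)^{1/(2n+1)^s})`. -/
theorem exp_two_eta_deriv_eq_product (s : ℝ) (hs : 0 < s) (η' : ℝ)
    (hη' : Tendsto (fun N => ∑ k ∈ Finset.range N,
        (-1 : ℝ) ^ (k + 1) * Real.log ((k + 1 : ℕ) : ℝ) / ((k + 1 : ℕ) : ℝ) ^ s)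
      atTop (nhds η')) :
    Tendsto (fun N => ∏ n ∈ Finset.range N,
        ((2 * (n + 1 : ℕ) : ℝ) ^ (1 / (2 * (n + 1 : ℕ) : ℝ) ^ s) *
          (2 * (n + 1 : ℕ) : ℝ) ^ (1 / (2 * (n + 1 : ℕ) : ℝ) ^ s) /
            ((2 * (n + 1 : ℕ) - 1 : ℝ) ^ (1 / (2 * (n + 1 : ℕ) - 1 : ℝ) ^ s) *
              (2 * (n + 1 : ℕ) + 1 : ℝ) ^ (1 / (2 * (n + 1 : ℕ) + 1 : ℝ) ^ s))))
      atTop (nhds (Real.exp (2 * η'))) := by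
  set L : ℕ → ℝ := fun k => Real.log k / (k : ℝ) ^ s with hLdef
  set S : ℕ → ℝ := fun N => ∑ k ∈ Finset.range N,
      (-1 : ℝ) ^ (k + 1) * Real.log ((k + 1 : ℕ) : ℝ) / ((k + 1 : ℕ) : ℝ) ^ s with hSdef
  -- each factor is an exponential
  have hfac : ∀ n : ℕ,
      ((2 * (n + 1 : ℕ) : ℝ) ^ (1 / (2 * (n + 1 : ℕ) : ℝ) ^ s) *
          (2 * (n + 1 : ℕ) : ℝ) ^ (1 / (2 * (n + 1 : ℕ) : ℝ) ^ s) /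
            ((2 * (n + 1 : ℕ) - 1 : ℝ) ^ (1 / (2 * (n + 1 : ℕ) - 1 : ℝ) ^ s) *
              (2 * (n + 1 : ℕ) + 1 : ℝ) ^ (1 / (2 * (n + 1 : ℕ) + 1 : ℝ) ^ s)))
      = Real.exp (2 * L (2 * n + 2) - (L (2 * n + 1) + L (2 * n + 3))) := by
    intro n
    have h1 : (2 * (n + 1 : ℕ) : ℝ) = ((2 * n + 2 : ℕ) : ℝ) := by push_cast; ring
    have h2 : (2 * (n + 1 : ℕ) - 1 : ℝ) = ((2 * n + 1 : ℕ) : ℝ) := by push_cast; ring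
    have h3 : (2 * (n + 1 : ℕ) + 1 : ℝ) = ((2 * n + 3 : ℕ) : ℝ) := by push_cast; ring
    have p1 : (0 : ℝ) < ((2 * n + 2 : ℕ) : ℝ) := by positivity
    have p2 : (0 : ℝ) < ((2 * n + 1 : ℕ) : ℝ) := by positivity
    have p3 : (0 : ℝ) < ((2 * n + 3 : ℕ) : ℝ) := by positivity
    rw [h2, h3, h1, Real.rpow_def_of_pos p1, Real.rpow_def_of_pos p2,
      Real.rpow_def_of_pos p3, ← Real.exp_add, ← Real.exp_add, ← Real.exp_sub,
      Real.exp_eq_exp]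
    simp only [hLdef]
    push_cast
    ring
  -- key summation identity
  have key : ∀ N : ℕ,
      ∑ n ∈ Finset.range N, (2 * L (2 * n + 2) - (L (2 * n + 1) + L (2 * n + 3)))
        = 2 * S (2 * N) - L (2 * N + 1) := by
    intro N
    induction N with
    | zero =>
      simp [hSdef, hLdef]
    | succ N ih =>
      have h2N : 2 * (N + 1) = 2 * N + 1 + 1 := by ring
      have hS : S (2 * (N + 1)) = S (2 * N) - L (2 * N + 1) + L (2 * N + 2) := by
        rw [h2N]
        simp only [hSdef, Finset.sum_range_succ]
        have ho : (-1 : ℝ) ^ (2 * N + 1) = -1 := Odd.neg_one_pow ⟨N, by ring⟩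
        have he : (-1 : ℝ) ^ (2 * N + 1 + 1) = 1 := Even.neg_one_pow ⟨N + 1, by ring⟩
        rw [ho, he]
        simp only [hLdef]
        push_cast
        have e : (2*(N:ℝ)+1+1) = 2*N+2 := by ring
        rw [e]
        ring
      rw [Finset.sum_range_succ, ih, hS]
      have h1 : 2 * (N + 1) + 1 = 2 * N + 3 := by ring
      have h2 : 2 * N + 1 + 1 = 2 * N + 2 := by ring
      rw [h1, h2]
      ring
  -- limit of the log-sums
  have htail : Tendsto (fun N : ℕ => L (2 * N + 1)) atTop (nhds 0) := by
    have h0 : Tendsto (fun x : ℝ => Real.log x / x ^ s) atTop (nhds 0) :=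
      (isLittleO_log_rpow_atTop hs).tendsto_div_nhds_zero
    have h1 : Tendsto (fun N : ℕ => ((2 * N + 1 : ℕ) : ℝ)) atTop atTop := by
      apply tendsto_natCast_atTop_atTop.comp
      exact tendsto_atTop_mono (f := fun n => n) (fun n => by show n ≤ 2*n+1; omega) tendsto_id
    exact h0.comp h1
  have hlim : Tendsto (fun N : ℕ => 2 * S (2 * N) - L (2 * N + 1)) atTop
      (nhds (2 * η')) := by
    have hS2 : Tendsto (fun N : ℕ => S (2 * N)) atTop (nhds η') :=
      hη'.comp (tendsto_atTop_mono (f := fun n => n) (fun n => by show n ≤ 2*n; omega) tendsto_id)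
    have := ((hS2.const_mul 2).sub htail)
    simpa using this
  have := (Real.continuous_exp.tendsto _).comp hlim
  refine this.congr fun N => ?_
  rw [Function.comp_apply, ← key N, Real.exp_sum]
  exact Finset.prod_congr rfl fun n _ => (hfac n).symm
end

section
/- The derivative of the Dirichlet eta function at 1 satisfies η'(1) = γ·ln 2 - (1/2)(ln 2)² = (1/2)·ln(2^{2γ - ln 2}), where γ is the Euler–Mascheroni constant. -/
open Real Filter Finset

private noncomputable def etaA (N : ℕ) : ℝ :=
  ∑ k ∈ Finset.range N, Real.log ((k + 1 : ℕ) : ℝ) / ((k + 1 : ℕ) : ℝ)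

private lemma eta_key_identity (M : ℕ) :
    ∑ k ∈ Finset.range (2 * M),
        (-1 : ℝ) ^ (k + 1) * Real.log ((k + 1 : ℕ) : ℝ) / ((k + 1 : ℕ) : ℝ)
      = Real.log 2 * (harmonic M : ℝ) + etaA M - etaA (2 * M) := by
  induction M with
  | zero => simp [etaA]
  | succ M ih =>
    have h2 : 2 * (M + 1) = (2 * M) + 1 + 1 := by ring
    have hA2 : etaA ((2 * M) + 1 + 1) = etaA (2 * M)
        + Real.log ((2 * M + 1 : ℕ) : ℝ) / ((2 * M + 1 : ℕ) : ℝ)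
        + Real.log ((2 * M + 1 + 1 : ℕ) : ℝ) / ((2 * M + 1 + 1 : ℕ) : ℝ) := by
      unfold etaA
      rw [Finset.sum_range_succ, Finset.sum_range_succ]
    have hA1 : etaA (M + 1) = etaA M + Real.log ((M + 1 : ℕ) : ℝ) / ((M + 1 : ℕ) : ℝ) := by
      unfold etaA
      rw [Finset.sum_range_succ]
    rw [h2, Finset.sum_range_succ, Finset.sum_range_succ, ih, hA2, hA1, harmonic_succ]
    have hodd : (-1 : ℝ) ^ (2 * M + 1) = -1 := Odd.neg_one_pow ⟨M, by ring⟩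
    have heven : (-1 : ℝ) ^ (2 * M + 1 + 1) = 1 := Even.neg_one_pow ⟨M + 1, by ring⟩
    have hx1 : ((M : ℝ) + 1) ≠ 0 := by positivity
    have hlog : Real.log (2 * (M : ℝ) + 1 + 1) = Real.log 2 + Real.log ((M : ℝ) + 1) := by
      rw [show (2 * (M : ℝ) + 1 + 1) = 2 * ((M : ℝ) + 1) by ring,
        Real.log_mul two_ne_zero hx1]
    push_cast
    rw [hodd, heven, hlog]
    have h21 : (2 * (M : ℝ) + 1) ≠ 0 := by positivity
    field_simp
    ring

private lemma eta_G_tendsto :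
    Tendsto (fun M : ℕ => Real.log (M : ℝ) / (M : ℝ)) atTop (nhds 0) := by
  have h1 : Tendsto (fun x : ℝ => Real.log x / x) atTop (nhds 0) := by
    simpa [Function.comp] using Real.isLittleO_log_id_atTop.tendsto_div_nhds_zero
  exact h1.comp tendsto_natCast_atTop_atTop

private lemma eta_integral (M : ℕ) (hM : 1 ≤ M) :
    ∫ x in (M : ℝ)..((2 * M : ℕ) : ℝ), Real.log x / x
      = Real.log 2 * Real.log (M : ℝ) + (Real.log 2) ^ 2 / 2 := by
  have h0 : (0 : ℝ) < M := by exact_mod_cast hM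
  have hle : (M : ℝ) ≤ ((2 * M : ℕ) : ℝ) := by push_cast; linarith
  have hderiv : ∀ x ∈ Set.uIcc (M : ℝ) ((2 * M : ℕ) : ℝ),
      HasDerivAt (fun x : ℝ => (Real.log x) ^ 2 / 2) (Real.log x / x) x := by
    intro x hx
    rw [Set.uIcc_of_le hle] at hx
    have hx0 : 0 < x := lt_of_lt_of_le h0 hx.1
    have H := ((Real.hasDerivAt_log hx0.ne').pow 2).div_const 2
    refine H.congr_deriv ?_
    field_simp
    ring
  have hint : IntervalIntegrable (fun x => Real.log x / x) MeasureTheory.volume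
      (M : ℝ) ((2 * M : ℕ) : ℝ) := by
    apply ContinuousOn.intervalIntegrable
    apply ContinuousOn.div (Real.continuousOn_log.mono ?_) continuousOn_id ?_
    · intro x hx
      rw [Set.uIcc_of_le hle] at hx
      exact ne_of_gt (lt_of_lt_of_le h0 hx.1)
    · intro x hx
      rw [Set.uIcc_of_le hle] at hx
      exact ne_of_gt (lt_of_lt_of_le h0 hx.1)
  rw [intervalIntegral.integral_eq_sub_of_hasDerivAt hderiv hint]
  push_cast
  rw [show (2 * (M : ℝ)) = 2 * ((M : ℝ)) by ring, Real.log_mul two_ne_zero h0.ne']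
  ring

private lemma eta_D_tendsto :
    Tendsto (fun M : ℕ => (etaA (2 * M) - etaA M)
      - (Real.log 2 * Real.log (M : ℝ) + (Real.log 2) ^ 2 / 2)) atTop (nhds 0) := by
  set f : ℝ → ℝ := fun x => Real.log x / x with hf
  have hbounds : ∀ M : ℕ, 3 ≤ M →
      - (Real.log (M : ℝ) / (M : ℝ)) ≤ (etaA (2 * M) - etaA M)
        - (Real.log 2 * Real.log (M : ℝ) + (Real.log 2) ^ 2 / 2) ∧
      (etaA (2 * M) - etaA M)
        - (Real.log 2 * Real.log (M : ℝ) + (Real.log 2) ^ 2 / 2) ≤ 0 := by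
    intro M hM3
    have hM1 : 1 ≤ M := by omega
    have h0 : (0 : ℝ) < M := by exact_mod_cast hM1
    have hMle : M ≤ 2 * M := by omega
    have hanti : AntitoneOn f (Set.Icc (M : ℝ) ((2 * M : ℕ) : ℝ)) := by
      apply Real.log_div_self_antitoneOn.mono
      intro x hx
      have h3 : (3 : ℝ) ≤ M := by exact_mod_cast hM3
      have : Real.exp 1 ≤ x := by
        calc Real.exp 1 ≤ 3 := by
              have := Real.exp_one_lt_d9; linarith
          _ ≤ x := le_trans h3 hx.1
      exact this
    have hB : etaA (2 * M) - etaA M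
        = ∑ k ∈ Finset.Ico M (2 * M), f (((k + 1 : ℕ)) : ℝ) := by
      rw [Finset.sum_Ico_eq_sub _ hMle]
      rfl
    have hI := eta_integral M hM1
    have hlow : etaA (2 * M) - etaA M ≤ ∫ x in (M : ℝ)..((2 * M : ℕ) : ℝ), f x := by
      rw [hB]
      exact AntitoneOn.sum_le_integral_Ico hMle hanti
    have hup : (∫ x in (M : ℝ)..((2 * M : ℕ) : ℝ), f x)
        ≤ f (M : ℝ) + (etaA (2 * M) - etaA M) := by
      have h1 := AntitoneOn.integral_le_sum_Ico hMle hanti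
      have hshift : (∑ k ∈ Finset.Ico M (2 * M), f ((k : ℕ) : ℝ)) + f ((2 * M : ℕ) : ℝ)
          = f ((M : ℕ) : ℝ) + ∑ k ∈ Finset.Ico M (2 * M), f (((k + 1 : ℕ)) : ℝ) := by
        rw [Finset.sum_eq_sum_Ico_succ_bot (by omega : M < 2 * M)]
        have : (∑ k ∈ Finset.Ico M (2 * M), f (((k + 1 : ℕ)) : ℝ))
            = ∑ k ∈ Finset.Ico (M + 1) (2 * M + 1), f ((k : ℕ) : ℝ) := by
          rw [← Finset.sum_Ico_add' (fun k : ℕ => f ((k : ℕ) : ℝ)) M (2 * M) 1]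
        rw [this, Finset.sum_Ico_succ_top (by omega : M + 1 ≤ 2 * M)]
        ring
      have hf2M : 0 ≤ f ((2 * M : ℕ) : ℝ) := by
        apply div_nonneg _ (by positivity)
        apply Real.log_nonneg
        have : (1 : ℝ) ≤ (M : ℝ) := by exact_mod_cast hM1
        push_cast
        linarith
      rw [hB]
      calc (∫ x in (M : ℝ)..((2 * M : ℕ) : ℝ), f x)
          ≤ ∑ k ∈ Finset.Ico M (2 * M), f ((k : ℕ) : ℝ) := h1
        _ ≤ (∑ k ∈ Finset.Ico M (2 * M), f ((k : ℕ) : ℝ)) + f ((2 * M : ℕ) : ℝ) := by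
            linarith
        _ = f ((M : ℕ) : ℝ) + ∑ k ∈ Finset.Ico M (2 * M), f (((k + 1 : ℕ)) : ℝ) := hshift
    rw [hI] at hlow hup
    constructor
    · simpa [hf] using by linarith
    · linarith
  apply tendsto_of_tendsto_of_tendsto_of_le_of_le'
    (g := fun M : ℕ => - (Real.log (M : ℝ) / (M : ℝ))) (h := fun _ : ℕ => (0 : ℝ))
  · simpa using eta_G_tendsto.neg
  · exact tendsto_const_nhds
  · filter_upwards [eventually_ge_atTop 3] with M hM using (hbounds M hM).1
  · filter_upwards [eventually_ge_atTop 3] with M hM using (hbounds M hM).2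

/-- The derivative of the Dirichlet eta function at `1`, i.e. the sum `η'(1)` of the
convergent series `∑_{k=1}^∞ (-1)^k ln k / k`, satisfies
`η'(1) = γ ln 2 - (1/2)(ln 2)² = (1/2) ln (2^{2γ - ln 2})`. -/
theorem eta_deriv_one (η'1 : ℝ)
    (h : Tendsto (fun N => ∑ k ∈ Finset.range N,
        (-1 : ℝ) ^ (k + 1) * Real.log ((k + 1 : ℕ) : ℝ) / ((k + 1 : ℕ) : ℝ))
      atTop (nhds η'1)) :
    η'1 = Real.eulerMascheroniConstant * Real.log 2 - (1 / 2) * (Real.log 2) ^ 2 ∧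
      η'1 = (1 / 2) * Real.log
        ((2 : ℝ) ^ (2 * Real.eulerMascheroniConstant - Real.log 2)) := by
  have hsub : Tendsto (fun M : ℕ => ∑ k ∈ Finset.range (2 * M),
      (-1 : ℝ) ^ (k + 1) * Real.log ((k + 1 : ℕ) : ℝ) / ((k + 1 : ℕ) : ℝ))
      atTop (nhds η'1) :=
    h.comp (tendsto_atTop_mono (fun n => Nat.le_mul_of_pos_left n two_pos) tendsto_id)
  have hlim : Tendsto (fun M : ℕ => ∑ k ∈ Finset.range (2 * M),
      (-1 : ℝ) ^ (k + 1) * Real.log ((k + 1 : ℕ) : ℝ) / ((k + 1 : ℕ) : ℝ))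
      atTop (nhds (Real.eulerMascheroniConstant * Real.log 2
        - (1 / 2) * (Real.log 2) ^ 2)) := by
    have heq : ∀ M : ℕ, ∑ k ∈ Finset.range (2 * M),
        (-1 : ℝ) ^ (k + 1) * Real.log ((k + 1 : ℕ) : ℝ) / ((k + 1 : ℕ) : ℝ)
        = Real.log 2 * ((harmonic M : ℝ) - Real.log (M : ℝ))
          - ((etaA (2 * M) - etaA M)
            - (Real.log 2 * Real.log (M : ℝ) + (Real.log 2) ^ 2 / 2))
          - (Real.log 2) ^ 2 / 2 := by
      intro M
      rw [eta_key_identity M]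
      ring
    have h1 := ((Real.tendsto_harmonic_sub_log.const_mul (Real.log 2)).sub
      eta_D_tendsto).sub_const ((Real.log 2) ^ 2 / 2)
    simp only [sub_zero] at h1
    have h2 : Real.log 2 * Real.eulerMascheroniConstant - (Real.log 2) ^ 2 / 2
        = Real.eulerMascheroniConstant * Real.log 2 - (1 / 2) * (Real.log 2) ^ 2 := by
      ring
    rw [h2] at h1
    exact h1.congr (fun M => (heq M).symm)
  have h1 : η'1 = Real.eulerMascheroniConstant * Real.log 2
      - (1 / 2) * (Real.log 2) ^ 2 := tendsto_nhds_unique hsub hlim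
  refine ⟨h1, ?_⟩
  rw [Real.log_rpow two_pos, h1]
  ring
end

section
/- The limit lim_{n→∞} H(n) / ( n^{n²/2 + n/2 + 1/12} · e^{-n²/4} ) exists and is a positive real number (the Glaisher–Kinkelin constant A). -/
open Real Filter Finset

private lemma gk_key (x : ℝ) (hx : 2 ≤ x) :
    |(2*x+1)/4 - (x^2/2 + x/2 + 1/12) * Real.log (1 + 1/x)| ≤ 3 / x^2 := by
  have hx0 : (0:ℝ) < x := by linarith
  set t : ℝ := 1/x with ht
  have ht0 : 0 < t := by positivity
  have ht2 : t ≤ 1/2 := by rw [ht]; rw [div_le_div_iff₀ hx0 (by norm_num)]; linarith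
  have habs : |(-t)| < 1 := by rw [abs_neg, abs_of_pos ht0]; linarith
  have h := Real.abs_log_sub_add_sum_range_le habs 3
  rw [abs_neg, abs_of_pos ht0] at h
  have hsum : ∑ i ∈ Finset.range 3, (-t) ^ (i + 1) / ((i:ℝ) + 1) = -t + t^2/2 - t^3/3 := by
    simp [Finset.sum_range_succ]; ring
  rw [hsum, sub_neg_eq_add] at h
  set c : ℝ := x^2/2 + x/2 + 1/12 with hc
  have hcpos : 0 < c := by positivity
  have hcx : c ≤ x^2 := by rw [hc]; nlinarith [sq_nonneg (x-2)]
  have heps : |Real.log (1 + t) - (t - t^2/2 + t^3/3)| ≤ t^4/(1-t) := by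
    have e : Real.log (1 + t) - (t - t^2/2 + t^3/3) = (-t + t^2/2 - t^3/3) + Real.log (1+t) := by ring
    rw [e]; exact h
  have hmain : (2*x+1)/4 - c * (t - t^2/2 + t^3/3) = -1/(8*x^2) - 1/(36*x^3) := by
    rw [ht, hc]; field_simp; ring
  have hbound : |c * (Real.log (1 + t) - (t - t^2/2 + t^3/3))| ≤ 2/x^2 := by
    rw [abs_mul, abs_of_pos hcpos]
    have h1 : t^4/(1-t) ≤ 2 * t^4 := by
      rw [div_le_iff₀ (by linarith)]; nlinarith [pow_pos ht0 4]
    have h2 : c * (t^4/(1-t)) ≤ x^2 * (2 * t^4) :=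
      mul_le_mul hcx h1 (div_nonneg (by positivity) (by linarith)) (by positivity)
    calc c * |Real.log (1 + t) - (t - t^2/2 + t^3/3)| ≤ c * (t^4/(1-t)) :=
          mul_le_mul_of_nonneg_left heps hcpos.le
      _ ≤ x^2 * (2 * t^4) := h2
      _ = 2/x^2 := by rw [ht]; field_simp
  have e2 : (2*x+1)/4 - c * Real.log (1 + t) =
      (-1/(8*x^2) - 1/(36*x^3)) - c * (Real.log (1 + t) - (t - t^2/2 + t^3/3)) := by
    rw [← hmain]; ring
  rw [e2]
  have hA : |(-1/(8*x^2) - 1/(36*x^3))| ≤ 1/(8*x^2) + 1/(36*x^3) := by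
    rw [show (-1/(8*x^2) - 1/(36*x^3)) = -(1/(8*x^2)+1/(36*x^3)) by ring, abs_neg,
      abs_of_nonneg (by positivity)]
  have h36 : 1/(36*x^3) ≤ 7/(8*x^2) := by
    rw [div_le_div_iff₀ (by positivity) (by positivity)]; nlinarith [pow_pos hx0 2, pow_pos hx0 3]
  have hfin : 1/(8*x^2) + 7/(8*x^2) + 2/x^2 = 3/x^2 := by field_simp; ring
  calc |(-1/(8*x^2) - 1/(36*x^3)) - c * (Real.log (1 + t) - (t - t^2/2 + t^3/3))|
      ≤ |(-1/(8*x^2) - 1/(36*x^3))| + |c * (Real.log (1 + t) - (t - t^2/2 + t^3/3))| := abs_sub _ _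
    _ ≤ 3/x^2 := by linarith

private noncomputable def gkf (n : ℕ) : ℝ :=
  (∑ k ∈ Finset.Icc 1 n, (k:ℝ) * Real.log k)
    - ((n:ℝ)^2/2 + (n:ℝ)/2 + 1/12) * Real.log n + (n:ℝ)^2/4

private lemma gk_diff (n : ℕ) (hn : 2 ≤ n) :
    |gkf (n+1) - gkf n| ≤ 3 / (n:ℝ)^2 := by
  have hx : (2:ℝ) ≤ (n:ℝ) := by exact_mod_cast hn
  have hx0 : (0:ℝ) < (n:ℝ) := by linarith
  set x : ℝ := (n:ℝ) with hxd
  have hsum : ∑ k ∈ Finset.Icc 1 (n+1), (k:ℝ) * Real.log k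
      = (∑ k ∈ Finset.Icc 1 n, (k:ℝ) * Real.log k) + (x+1) * Real.log (x+1) := by
    rw [Finset.sum_Icc_succ_top (by omega : 1 ≤ n+1)]
    push_cast; rw [hxd]
  have hlog : Real.log (x+1) = Real.log x + Real.log (1 + 1/x) := by
    rw [← Real.log_mul (by linarith) (by positivity)]
    congr 1; field_simp
  have e : gkf (n+1) - gkf n
      = (2*x+1)/4 - (x^2/2 + x/2 + 1/12) * Real.log (1 + 1/x) := by
    unfold gkf
    rw [hsum]
    push_cast
    rw [hlog]
    ring
  rw [e]
  exact gk_key x hx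

/-- The limit `lim_{n→∞} H(n) / (n^{n²/2 + n/2 + 1/12} e^{-n²/4})`, where
`H(n) = ∏_{k=1}^n k^k` is the hyperfactorial, exists and is a positive real number
(the Glaisher–Kinkelin constant `A`). -/
theorem glaisher_kinkelin_limit_exists :
    ∃ A : ℝ, 0 < A ∧
      Tendsto (fun n : ℕ =>
          (∏ k ∈ Finset.Icc 1 n, (k : ℝ) ^ (k : ℝ)) /
            ((n : ℝ) ^ ((n : ℝ) ^ 2 / 2 + (n : ℝ) / 2 + 1 / 12) *
              Real.exp (-(n : ℝ) ^ 2 / 4)))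
        atTop (nhds A) := by
  -- the sequence gkf is Cauchy
  set d : ℕ → ℝ := fun n => |gkf (n+1) - gkf n| with hd
  have hdle : ∀ n, d n ≤ 3/(n:ℝ)^2 + (if n < 2 then d n else 0) := by
    intro n
    by_cases h : n < 2
    · simp only [h, if_pos]
      have : (0:ℝ) ≤ 3/(n:ℝ)^2 := by positivity
      linarith
    · simp only [h, if_neg, not_false_iff]
      simpa using gk_diff n (by omega)
  have hs1 : Summable (fun n : ℕ => 3/(n:ℝ)^2) := by
    have := (Real.summable_one_div_nat_pow (p := 2)).mpr (by norm_num)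
    simpa [div_eq_mul_inv] using this.mul_left 3
  have hs2 : Summable (fun n : ℕ => if n < 2 then d n else 0) := by
    apply summable_of_ne_finset_zero (s := Finset.range 2)
    intro n hn
    simp only [Finset.mem_range, not_lt] at hn
    simp [Nat.not_lt.mpr hn]
  have hsd : Summable d :=
    Summable.of_nonneg_of_le (fun n => abs_nonneg _) hdle (hs1.add hs2)
  have hcauchy : CauchySeq gkf := by
    apply cauchySeq_of_dist_le_of_summable d _ hsd
    intro n
    rw [Real.dist_eq, abs_sub_comm]
  obtain ⟨L, hL⟩ := cauchySeq_tendsto_of_complete hcauchy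
  refine ⟨Real.exp L, Real.exp_pos L, ?_⟩
  have htend : Tendsto (fun n => Real.exp (gkf n)) atTop (nhds (Real.exp L)) :=
    (Real.continuous_exp.tendsto L).comp hL
  apply htend.congr'
  filter_upwards [eventually_ge_atTop 1] with n hn
  have hn0 : (0:ℝ) < (n:ℝ) := by exact_mod_cast Nat.lt_of_lt_of_le Nat.zero_lt_one hn
  have hprod : (∏ k ∈ Finset.Icc 1 n, (k:ℝ) ^ (k:ℝ))
      = Real.exp (∑ k ∈ Finset.Icc 1 n, (k:ℝ) * Real.log k) := by
    rw [Real.exp_sum]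
    apply Finset.prod_congr rfl
    intro k hk
    have hk1 : 1 ≤ k := (Finset.mem_Icc.mp hk).1
    have hk0 : (0:ℝ) < (k:ℝ) := by exact_mod_cast hk1
    rw [Real.rpow_def_of_pos hk0, mul_comm]
  have hpow : (n:ℝ) ^ ((n:ℝ)^2/2 + (n:ℝ)/2 + 1/12)
      = Real.exp (((n:ℝ)^2/2 + (n:ℝ)/2 + 1/12) * Real.log n) := by
    rw [Real.rpow_def_of_pos hn0, mul_comm]
  rw [hprod, hpow, ← Real.exp_add, ← Real.exp_sub]
  unfold gkf
  congr 1
  ring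
end

section
/- If the series ∑_{k=1}^∞ (-1)^k·ln(k)/k² converges to (π²/12)·ln( 4πe^γ / A^{12} ), then the infinite product ∏_{n=1}^∞ [ (2n)^{2/(2n)²} / ( (2n-1)^{1/(2n-1)²} · (2n+1)^{1/(2n+1)²} ) ] converges and equals ( 4πe^γ / A^{12} )^{π²/6}. -/
open Real Filter Finset

noncomputable def petAA (k : ℕ) : ℝ := Real.log k / (k : ℝ) ^ 2

noncomputable def petFF (k : ℕ) : ℝ :=
  (-1 : ℝ) ^ (k + 1) * Real.log ((k + 1 : ℕ) : ℝ) / ((k + 1 : ℕ) : ℝ) ^ 2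

lemma petFF_eq (k : ℕ) : petFF k = (-1 : ℝ) ^ (k + 1) * petAA (k + 1) := by
  simp [petFF, petAA, mul_div_assoc]

lemma petFF_even (m : ℕ) : petFF (2 * m + 1) = petAA (2 * m + 2) := by
  rw [petFF_eq]
  have : (-1 : ℝ) ^ (2 * m + 1 + 1) = 1 := Even.neg_one_pow ⟨m + 1, by ring⟩
  rw [this, one_mul]

lemma petFF_odd (m : ℕ) : petFF (2 * m + 2) = -petAA (2 * m + 3) := by
  rw [petFF_eq]
  have : (-1 : ℝ) ^ (2 * m + 2 + 1) = -1 := Odd.neg_one_pow ⟨m + 1, by ring⟩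
  rw [this]; ring

noncomputable def petSS (N : ℕ) : ℝ := ∑ k ∈ Finset.range N, petFF k

lemma petSS_succ (N : ℕ) : petSS (N + 1) = petSS N + petFF N := Finset.sum_range_succ _ _

lemma petSS_two_step (N : ℕ) :
    petSS (2 * (N + 1) + 1) = petSS (2 * N + 1) + petFF (2 * N + 1) + petFF (2 * N + 2) := by
  have e : 2 * (N + 1) + 1 = (2 * N + 1) + 1 + 1 := by ring
  rw [e, petSS_succ, petSS_succ]

lemma petKey (N : ℕ) :
    ∑ n ∈ Finset.range N, (2 * petAA (2 * n + 2) - petAA (2 * n + 1) - petAA (2 * n + 3))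
      = 2 * petSS (2 * N + 1) + petAA (2 * N + 1) := by
  induction N with
  | zero =>
      simp [petSS, petFF, petAA]
  | succ N ih =>
      rw [Finset.sum_range_succ, ih, petSS_two_step, petFF_even, petFF_odd]
      have e : 2 * (N + 1) + 1 = 2 * N + 3 := by ring
      rw [e]; ring

lemma petAA_nonneg (k : ℕ) : 0 ≤ petAA k := by
  rcases Nat.eq_zero_or_pos k with rfl | hk
  · simp [petAA]
  · exact div_nonneg (Real.log_nonneg (by exact_mod_cast hk)) (by positivity)

lemma petAA_mono (k : ℕ) (hk : 2 ≤ k) : petAA (k + 1) ≤ petAA k := by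
  have hx2 : (2 : ℝ) ≤ (k : ℝ) := by exact_mod_cast hk
  set x : ℝ := (k : ℝ) with hxdef
  have hx0 : (0 : ℝ) < x := by linarith
  have hlogx : (1 : ℝ) / 2 ≤ Real.log x := by
    have h2 : (0.6931471803 : ℝ) < Real.log 2 := Real.log_two_gt_d9
    have := Real.log_le_log (by norm_num : (0:ℝ) < 2) hx2
    linarith
  have hlog1 : Real.log (x + 1) ≤ Real.log x + 1 / x := by
    have h := Real.log_le_sub_one_of_pos (show (0:ℝ) < (x + 1) / x by positivity)
    rw [Real.log_div (by linarith) (by linarith)] at h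
    have he : (x + 1) / x - 1 = 1 / x := by field_simp; ring
    linarith [he ▸ h]
  have hmul : Real.log (x + 1) * x ^ 2 ≤ Real.log x * x ^ 2 + x := by
    have h2 := mul_le_mul_of_nonneg_right hlog1 (sq_nonneg x)
    have hxx : (Real.log x + 1 / x) * x ^ 2 = Real.log x * x ^ 2 + x := by
      field_simp
    rw [hxx] at h2; exact h2
  have : Real.log (x + 1) / (x + 1) ^ 2 ≤ Real.log x / x ^ 2 := by
    rw [div_le_div_iff₀ (by positivity) (by positivity)]
    nlinarith [hmul, mul_le_mul_of_nonneg_left hlogx (show (0:ℝ) ≤ 2 * x + 1 by linarith)]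
  unfold petAA
  push_cast
  exact this

lemma petSS_lower : ∀ m : ℕ, petSS 3 ≤ petSS (2 * m + 3) ∧ petSS 3 ≤ petSS (2 * m + 4) := by
  intro m
  induction m with
  | zero =>
      refine ⟨le_refl _, ?_⟩
      have h4 : petSS (2 * 0 + 4) = petSS 3 + petFF 3 := petSS_succ 3
      have h3 : petFF 3 = petAA 4 := petFF_even 1
      have h0 := petAA_nonneg 4
      rw [h4, h3]
      linarith
  | succ m ih =>
      have e1 : 2 * (m + 1) + 3 = (2 * m + 3) + 1 + 1 := by ring
      have hstep : petSS (2 * (m + 1) + 3) = petSS (2 * m + 3) + petFF (2 * m + 3) + petFF (2 * m + 4) := by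
        rw [e1, petSS_succ, petSS_succ]
      have hf1 : petFF (2 * m + 3) = petAA (2 * m + 4) := by
        have := petFF_even (m + 1); rw [show 2 * (m + 1) + 1 = 2 * m + 3 from by ring,
          show 2 * (m + 1) + 2 = 2 * m + 4 from by ring] at this; exact this
      have hf2 : petFF (2 * m + 4) = -petAA (2 * m + 5) := by
        have := petFF_odd (m + 1); rw [show 2 * (m + 1) + 2 = 2 * m + 4 from by ring,
          show 2 * (m + 1) + 3 = 2 * m + 5 from by ring] at this; exact this
      have hmono : petAA (2 * m + 5) ≤ petAA (2 * m + 4) := by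
        have := petAA_mono (2 * m + 4) (by omega)
        simpa [show 2 * m + 4 + 1 = 2 * m + 5 from by ring] using this
      have hodd : petSS 3 ≤ petSS (2 * (m + 1) + 3) := by
        rw [hstep, hf1, hf2]; linarith [ih.1]
      refine ⟨hodd, ?_⟩
      have h5 : petSS (2 * (m + 1) + 4) = petSS (2 * (m + 1) + 3) + petFF (2 * (m + 1) + 3) :=
        petSS_succ (2 * (m + 1) + 3)
      have hf3 : petFF (2 * (m + 1) + 3) = petAA (2 * (m + 1) + 4) := by
        have := petFF_even (m + 2); rw [show 2 * (m + 2) + 1 = 2 * (m + 1) + 3 from by ring,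
          show 2 * (m + 2) + 2 = 2 * (m + 1) + 4 from by ring] at this; exact this
      have h6 := petAA_nonneg (2 * (m + 1) + 4)
      rw [h5, hf3]
      linarith

lemma petSS_three_pos : 0 < petSS 3 := by
  have h23 : Real.log 3 * 4 < Real.log 2 * 9 := by
    have h := Real.log_lt_log (by norm_num : (0:ℝ) < 81) (by norm_num : (81:ℝ) < 512)
    rw [show (81:ℝ) = 3 ^ 4 by norm_num, show (512:ℝ) = 2 ^ 9 by norm_num,
      Real.log_pow, Real.log_pow] at h
    push_cast at h
    linarith
  have : petSS 3 = Real.log 2 / 4 - Real.log 3 / 9 := by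
    simp [petSS, Finset.sum_range_succ, petFF]
    norm_num
    ring
  rw [this]; linarith

lemma petFactor (n : ℕ) :
    ((2 * (n + 1 : ℕ) : ℝ) ^ (2 / (2 * (n + 1 : ℕ) : ℝ) ^ 2) /
        ((2 * (n + 1 : ℕ) - 1 : ℝ) ^ ((1 : ℝ) / (2 * (n + 1 : ℕ) - 1 : ℝ) ^ 2) *
          (2 * (n + 1 : ℕ) + 1 : ℝ) ^ ((1 : ℝ) / (2 * (n + 1 : ℕ) + 1 : ℝ) ^ 2)))
      = Real.exp (2 * petAA (2 * n + 2) - petAA (2 * n + 1) - petAA (2 * n + 3)) := by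
  have b1 : (2 * (n + 1 : ℕ) : ℝ) = ((2 * n + 2 : ℕ) : ℝ) := by push_cast; ring
  have b2 : (2 * (n + 1 : ℕ) - 1 : ℝ) = ((2 * n + 1 : ℕ) : ℝ) := by push_cast; ring
  have b3 : (2 * (n + 1 : ℕ) + 1 : ℝ) = ((2 * n + 3 : ℕ) : ℝ) := by push_cast; ring
  rw [b2, b3, b1]
  have p1 : (0 : ℝ) < ((2 * n + 2 : ℕ) : ℝ) := by exact_mod_cast Nat.succ_pos _
  have p2 : (0 : ℝ) < ((2 * n + 1 : ℕ) : ℝ) := by exact_mod_cast Nat.succ_pos _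
  have p3 : (0 : ℝ) < ((2 * n + 3 : ℕ) : ℝ) := by exact_mod_cast Nat.succ_pos _
  rw [Real.rpow_def_of_pos p1, Real.rpow_def_of_pos p2, Real.rpow_def_of_pos p3,
    ← Real.exp_add, ← Real.exp_sub]
  congr 1
  unfold petAA
  ring

/-- If `∑_{k=1}^∞ (-1)^k ln k / k²` converges to `(π²/12) ln (4 π e^γ / A^12)`, then
`∏_{n=1}^∞ (2n)^{2/(2n)²} / ((2n-1)^{1/(2n-1)²} (2n+1)^{1/(2n+1)²})` converges and equals
`(4 π e^γ / A^12)^{π²/6}`, where `A` is the Glaisher–Kinkelin constant and `γ` the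
Euler–Mascheroni constant. -/
theorem product_eta_two (A : ℝ)
    (h : Tendsto (fun N => ∑ k ∈ Finset.range N,
        (-1 : ℝ) ^ (k + 1) * Real.log ((k + 1 : ℕ) : ℝ) / ((k + 1 : ℕ) : ℝ) ^ 2)
      atTop (nhds ((Real.pi ^ 2 / 12) *
        Real.log (4 * Real.pi * Real.exp Real.eulerMascheroniConstant / A ^ 12)))) :
    Tendsto (fun N => ∏ n ∈ Finset.range N,
        ((2 * (n + 1 : ℕ) : ℝ) ^ (2 / (2 * (n + 1 : ℕ) : ℝ) ^ 2) /
          ((2 * (n + 1 : ℕ) - 1 : ℝ) ^ ((1 : ℝ) / (2 * (n + 1 : ℕ) - 1 : ℝ) ^ 2) *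
            (2 * (n + 1 : ℕ) + 1 : ℝ) ^ ((1 : ℝ) / (2 * (n + 1 : ℕ) + 1 : ℝ) ^ 2))))
      atTop (nhds ((4 * Real.pi * Real.exp Real.eulerMascheroniConstant / A ^ 12) ^
        (Real.pi ^ 2 / 6))) := by
  set C : ℝ := 4 * Real.pi * Real.exp Real.eulerMascheroniConstant / A ^ 12 with hC
  set L : ℝ := Real.pi ^ 2 / 12 * Real.log C with hL
  have hSS : Tendsto petSS atTop (nhds L) := h
  rcases eq_or_ne A 0 with rfl | hA
  · -- A = 0 : hypothesis is contradictory
    exfalso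
    have hC0 : C = 0 := by rw [hC]; norm_num
    have hL0 : L = 0 := by rw [hL, hC0, Real.log_zero, mul_zero]
    rw [hL0] at hSS
    have hle : petSS 3 ≤ 0 := by
      refine ge_of_tendsto hSS ?_
      filter_upwards [eventually_ge_atTop 3] with N hN
      obtain ⟨m, hm⟩ : ∃ m, N = 2 * m + 3 ∨ N = 2 * m + 4 := ⟨(N - 3) / 2, by omega⟩
      rcases hm with rfl | rfl
      · exact (petSS_lower m).1
      · exact (petSS_lower m).2
    linarith [petSS_three_pos]
  · -- A ≠ 0 : main computation
    have hCpos : 0 < C := by rw [hC]; positivity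
    have hmN : Tendsto (fun N : ℕ => 2 * N + 1) atTop atTop :=
      tendsto_atTop_mono (fun n => by simp; omega) tendsto_id
    have hS2 : Tendsto (fun N => petSS (2 * N + 1)) atTop (nhds L) := hSS.comp hmN
    have hcast : Tendsto (fun N : ℕ => ((2 * N + 1 : ℕ) : ℝ)) atTop atTop :=
      tendsto_natCast_atTop_atTop.comp hmN
    have hAA : Tendsto (fun N : ℕ => petAA (2 * N + 1)) atTop (nhds 0) := by
      have hg : Tendsto (fun N : ℕ => Real.log ((2 * N + 1 : ℕ) : ℝ) / ((2 * N + 1 : ℕ) : ℝ))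
          atTop (nhds 0) := by
        have := (Real.tendsto_pow_log_div_mul_add_atTop 1 0 1 one_ne_zero).comp hcast
        refine this.congr fun N => ?_
        simp
      refine squeeze_zero' ?_ ?_ hg
      · exact Eventually.of_forall fun N => petAA_nonneg _
      · filter_upwards [eventually_ge_atTop 1] with N hN
        have h1 : (1 : ℝ) ≤ ((2 * N + 1 : ℕ) : ℝ) := by exact_mod_cast Nat.succ_le_succ (Nat.zero_le _)
        unfold petAA
        gcongr
        nlinarith [h1]
    have hExp : Tendsto (fun N => Real.exp (2 * petSS (2 * N + 1) + petAA (2 * N + 1)))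
        atTop (nhds (Real.exp (2 * L + 0))) :=
      (Real.continuous_exp.tendsto _).comp ((hS2.const_mul 2).add hAA)
    have hprod : ∀ N, ∏ n ∈ Finset.range N,
        ((2 * (n + 1 : ℕ) : ℝ) ^ (2 / (2 * (n + 1 : ℕ) : ℝ) ^ 2) /
          ((2 * (n + 1 : ℕ) - 1 : ℝ) ^ ((1 : ℝ) / (2 * (n + 1 : ℕ) - 1 : ℝ) ^ 2) *
            (2 * (n + 1 : ℕ) + 1 : ℝ) ^ ((1 : ℝ) / (2 * (n + 1 : ℕ) + 1 : ℝ) ^ 2)))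
        = Real.exp (2 * petSS (2 * N + 1) + petAA (2 * N + 1)) := by
      intro N
      rw [Finset.prod_congr rfl fun n _ => petFactor n, ← Real.exp_sum, petKey]
    have hval : Real.exp (2 * L + 0) = C ^ (Real.pi ^ 2 / 6) := by
      rw [add_zero, Real.rpow_def_of_pos hCpos, hL]; ring_nf
    have := hExp.congr fun N => (hprod N).symm
    rwa [hval] at this
end

section
/- If H(n) = ∏_{k=1}^n k^k is the hyperfactorial, then ln H(n) = ∑_{k=1}^n k·ln k, and ln H(n) - (n²/2 + n/2 + 1/12)·ln n + n²/4 converges as n → ∞ (to ln A, the logarithm of the Glaisher–Kinkelin constant). -/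
open Real Filter Finset

noncomputable def glA : ℕ → ℝ := fun n =>
  (∑ k ∈ Finset.Icc 1 n, (k : ℝ) * Real.log (k : ℝ)) -
    ((n : ℝ) ^ 2 / 2 + (n : ℝ) / 2 + 1 / 12) * Real.log (n : ℝ) + (n : ℝ) ^ 2 / 4

lemma glA_logprod (n : ℕ) : Real.log (∏ k ∈ Finset.Icc 1 n, (k : ℝ) ^ (k : ℝ)) =
    ∑ k ∈ Finset.Icc 1 n, (k : ℝ) * Real.log (k : ℝ) := by
  rw [Real.log_prod]
  · refine Finset.sum_congr rfl fun k hk => ?_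
    have hk1 : 1 ≤ k := (Finset.mem_Icc.1 hk).1
    rw [Real.log_rpow (by exact_mod_cast hk1)]
  · intro k hk
    have hk1 : 1 ≤ k := (Finset.mem_Icc.1 hk).1
    have : (0:ℝ) < (k:ℝ) := by exact_mod_cast hk1
    positivity

set_option maxHeartbeats 1000000 in
lemma glA_diff_bound (n : ℕ) (hn : 2 ≤ n) : |glA (n + 1) - glA n| ≤ 3 / (n : ℝ) ^ 2 := by
  set x : ℝ := (n : ℝ) with hxdef
  have hx2 : (2:ℝ) ≤ x := by rw [hxdef]; exact_mod_cast hn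
  have hx0 : (0:ℝ) < x := by linarith
  have hxne : x ≠ 0 := ne_of_gt hx0
  have hx1 : (0:ℝ) < x + 1 := by linarith
  -- difference of sums
  have hsum : (∑ k ∈ Finset.Icc 1 (n+1), (k : ℝ) * Real.log (k : ℝ)) =
      (∑ k ∈ Finset.Icc 1 n, (k : ℝ) * Real.log (k : ℝ)) + (x + 1) * Real.log (x + 1) := by
    rw [Finset.sum_Icc_succ_top (by omega : 1 ≤ n + 1)]
    push_cast
    rw [hxdef]
  have hc : ((n:ℝ) + 1) = x + 1 := by push_cast [hxdef]; ring
  have hdiff : glA (n + 1) - glA n =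
      (2*x+1)/4 - (x^2/2 + x/2 + 1/12) * (Real.log (x+1) - Real.log x) := by
    unfold glA
    push_cast
    rw [hsum]
    ring
  -- log expansion
  have habs : |(-(1/x))| < 1 := by
    rw [abs_neg, abs_of_pos (by positivity)]
    rw [div_lt_one hx0]; linarith
  have h := abs_log_sub_add_sum_range_le habs 4
  have hlog1 : Real.log (1 - (-(1/x))) = Real.log (x+1) - Real.log x := by
    have : 1 - (-(1/x)) = (x+1)/x := by field_simp; ring
    rw [this, Real.log_div (by linarith) hxne]
  have hS : (∑ i ∈ Finset.range 4, (-(1/x)) ^ (i + 1) / (i + 1)) =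
      -(1/x - 1/(2*x^2) + 1/(3*x^3) - 1/(4*x^4)) := by
    simp [Finset.sum_range_succ]
    field_simp
    ring
  rw [hS, hlog1] at h
  have habsx : |(-(1/x))| = 1/x := by rw [abs_neg, abs_of_pos (by positivity)]
  rw [habsx] at h
  -- r := deviation
  set P : ℝ := 1/x - 1/(2*x^2) + 1/(3*x^3) - 1/(4*x^4) with hP
  set r : ℝ := (Real.log (x+1) - Real.log x) - P with hr
  have hrb : |r| ≤ 1 / (x^4 * (x-1)) := by
    have : -(P) + (Real.log (x+1) - Real.log x) = r := by rw [hr]; ring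
    rw [this] at h
    have hxm1 : (0:ℝ) < x - 1 := by linarith
    have hd : (0:ℝ) < x^4 * (x-1) := by positivity
    have hdx : (0:ℝ) < 1 - 1/x := by
      have : 1/x < 1 := by rw [div_lt_one hx0]; linarith
      linarith
    have hrhs : (1/x)^(4+1) / (1 - 1/x) = 1 / (x^4 * (x-1)) := by
      rw [div_eq_div_iff hdx.ne' hd.ne']
      field_simp
      ring_nf
      field_simp
    rw [hrhs] at h; exact h
  set c : ℝ := x^2/2 + x/2 + 1/12 with hcdef
  have hmain : glA (n + 1) - glA n = 7/(72*x^3) + 1/(48*x^4) - c * r := by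
    rw [hdiff]
    have hlg : Real.log (x+1) - Real.log x = P + r := by rw [hr]; ring
    rw [hlg, hP, hcdef]
    field_simp
    ring
  rw [hmain]
  have hcx : c ≤ x^2 := by rw [hcdef]; nlinarith
  have hcr : |c * r| ≤ 1 / x^2 := by
    rw [abs_mul]
    have hc0 : 0 ≤ c := by rw [hcdef]; nlinarith
    rw [abs_of_nonneg hc0]
    calc c * |r| ≤ x^2 * (1 / (x^4 * (x-1))) := by
          apply mul_le_mul hcx hrb (abs_nonneg _) (by positivity)
      _ ≤ 1 / x^2 := by
          rw [mul_one_div, div_le_div_iff₀ (mul_pos (by positivity) (by linarith : (0:ℝ) < x - 1)) (by positivity)]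
          nlinarith
  have h1 : 7/(72*x^3) ≤ 1/x^2 := by
    rw [div_le_div_iff₀ (by positivity) (by positivity)]; nlinarith
  have hx4 : (4:ℝ) ≤ x^2 := by nlinarith
  have h2 : 1/(48*x^4) ≤ 1/x^2 := by
    rw [div_le_div_iff₀ (by positivity) (by positivity)]
    nlinarith [mul_le_mul_of_nonneg_left hx4 (by positivity : (0:ℝ) ≤ x^2)]
  have h3 : 0 ≤ 7/(72*x^3) := by positivity
  have h4 : 0 ≤ 1/(48*x^4) := by positivity
  calc |7/(72*x^3) + 1/(48*x^4) - c * r| ≤ |7/(72*x^3) + 1/(48*x^4)| + |c * r| := by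
        apply abs_sub
    _ ≤ (7/(72*x^3) + 1/(48*x^4)) + 1/x^2 := by
        rw [abs_of_nonneg (by linarith)]; linarith
    _ ≤ 3 / x^2 := by
        have : 3 / x^2 = 1/x^2 + 1/x^2 + 1/x^2 := by ring
        linarith

lemma glA_tendsto : ∃ L : ℝ, Tendsto glA atTop (nhds L) := by
  have hcauchy : CauchySeq glA := by
    apply cauchySeq_of_summable_dist
    rw [← summable_nat_add_iff 2]
    have hs : Summable (fun n : ℕ => 3 / ((n : ℝ) + 2) ^ 2) := by
      have h0 : Summable (fun n : ℕ => 3 * (1 / (n : ℝ) ^ 2)) :=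
        (summable_one_div_nat_pow.2 one_lt_two).mul_left 3
      have h1 := (summable_nat_add_iff 2).2 h0
      refine h1.congr fun n => ?_
      push_cast; ring
    refine Summable.of_nonneg_of_le (fun n => dist_nonneg) (fun n => ?_) hs
    have hb := glA_diff_bound (n + 2) (by omega)
    rw [Real.dist_eq]
    calc |glA (n + 2) - glA (n + 2).succ| = |glA ((n+2) + 1) - glA (n + 2)| := by
          rw [abs_sub_comm]
      _ ≤ 3 / ((n + 2 : ℕ) : ℝ) ^ 2 := hb
      _ = 3 / ((n : ℝ) + 2) ^ 2 := by norm_num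
  exact cauchySeq_tendsto_of_complete hcauchy

/-- If `H(n) = ∏_{k=1}^n k^k` is the hyperfactorial, then
`ln H(n) = ∑_{k=1}^n k ln k`, and `ln H(n) - (n²/2 + n/2 + 1/12) ln n + n²/4`
converges as `n → ∞` (to `ln A`, the logarithm of the Glaisher–Kinkelin constant). -/
theorem log_hyperfactorial :
    (∀ n : ℕ, Real.log (∏ k ∈ Finset.Icc 1 n, (k : ℝ) ^ (k : ℝ)) =
        ∑ k ∈ Finset.Icc 1 n, (k : ℝ) * Real.log (k : ℝ)) ∧
      ∃ L : ℝ, Tendsto (fun n : ℕ =>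
          Real.log (∏ k ∈ Finset.Icc 1 n, (k : ℝ) ^ (k : ℝ)) -
            ((n : ℝ) ^ 2 / 2 + (n : ℝ) / 2 + 1 / 12) * Real.log (n : ℝ) +
            (n : ℝ) ^ 2 / 4)
        atTop (nhds L) := by
  refine ⟨glA_logprod, ?_⟩
  obtain ⟨L, hL⟩ := glA_tendsto
  refine ⟨L, hL.congr fun n => ?_⟩
  unfold glA
  rw [glA_logprod]
end
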